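/- Let X, Z ∈ M_{n×p} be matrices of the same dimensions. If XZ* = 0 and X*Z = 0, then ‖X + Z‖_* = ‖X‖_* + ‖Z‖_*. -/

import Mathlib

open Matrix
open scoped ComplexOrder

namespace IRLSM

/-- Frobenius inner product `⟨X,Y⟩ = Tr(X Yᴴ)`. -/
noncomputable def frobInner {n p : ℕ} (X Y : Matrix (Fin n) (Fin p) ℂ) : ℂ :=
  Matrix.trace (X * Yᴴ)

/-- Frobenius norm. -/
noncomputable def frobNorm {n p : ℕ} (X : Matrix (Fin n) (Fin p) ℂ) : ℝ :=
  Real.sqrt (∑ i, ∑ j, Complex.normSq (X i j))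

/-- Singular values of `X` in nonincreasing order, `sv X 0 = σ₁ ≥ sv X 1 = σ₂ ≥ …`;
indices `≥ n` give `0`. -/
noncomputable def sv {n p : ℕ} (X : Matrix (Fin n) (Fin p) ℂ) : ℕ → ℝ :=
  fun i => ((List.ofFn fun j : Fin n =>
      Real.sqrt ((Matrix.isHermitian_mul_conjTranspose_self X).eigenvalues j)).mergeSort
      (fun a b => decide (b ≤ a))).getD i 0

/-- Nuclear norm `‖X‖_* = ∑ σᵢ(X)`. -/
noncomputable def nuclearNorm {n p : ℕ} (X : Matrix (Fin n) (Fin p) ℂ) : ℝ :=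
  ∑ i : Fin n, sv X (i : ℕ)

/-- Positive square root of a positive semidefinite matrix (junk value `0` otherwise). -/
noncomputable def matSqrt {n : ℕ} (W : Matrix (Fin n) (Fin n) ℂ) : Matrix (Fin n) (Fin n) ℂ :=
  @dite _ W.PosSemidef (Classical.dec _) (fun h => (h.1.eigenvectorUnitary : Matrix (Fin n) (Fin n) ℂ) *
    Matrix.diagonal (fun i => (RCLike.ofReal (Real.sqrt (h.1.eigenvalues i)) : ℂ)) *
    (star h.1.eigenvectorUnitary : Matrix (Fin n) (Fin n) ℂ)) (fun _ => 0)

/-- The functional `𝒥(X,W) = ½(‖W^{1/2}X‖_F² + ‖W^{-1/2}‖_F²)`. -/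
noncomputable def Jfun {n p : ℕ} (X : Matrix (Fin n) (Fin p) ℂ)
    (W : Matrix (Fin n) (Fin n) ℂ) : ℝ :=
  (frobNorm (matSqrt W * X) ^ 2 + frobNorm (matSqrt W⁻¹) ^ 2) / 2

/-- The restricted isometry constant `δ_k(𝒮)`: the smallest `δ ≥ 0` such that
`(1-δ)‖X‖_F² ≤ ‖𝒮(X)‖² ≤ (1+δ)‖X‖_F²` for all `X` of rank at most `k`. -/
noncomputable def ripConst {n p m : ℕ}
    (S : Matrix (Fin n) (Fin p) ℂ →ₗ[ℂ] (Fin m → ℂ)) (k : ℕ) : ℝ :=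
  sInf {δ : ℝ | 0 ≤ δ ∧ ∀ X : Matrix (Fin n) (Fin p) ℂ, X.rank ≤ k →
    (1 - δ) * frobNorm X ^ 2 ≤ ∑ i, Complex.normSq (S X i) ∧
      ∑ i, Complex.normSq (S X i) ≤ (1 + δ) * frobNorm X ^ 2}

/-- The rank null space property of order `k`. -/
def RNSP {n p m : ℕ} (S : Matrix (Fin n) (Fin p) ℂ →ₗ[ℂ] (Fin m → ℂ)) (k : ℕ) : Prop :=
  ∀ H : Matrix (Fin n) (Fin p) ℂ, S H = 0 → H ≠ 0 →
    ∀ H₁ H₂ : Matrix (Fin n) (Fin p) ℂ, H = H₁ + H₂ → H₁.rank ≤ k →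
      nuclearNorm H₁ < nuclearNorm H₂

/-- The strong rank null space property of order `k` with constant `η`. -/
def SRNSP {n p m : ℕ} (S : Matrix (Fin n) (Fin p) ℂ →ₗ[ℂ] (Fin m → ℂ)) (k : ℕ) (η : ℝ) : Prop :=
  ∀ X : Matrix (Fin n) (Fin p) ℂ, S X = 0 → X ≠ 0 →
    ∀ X₁ X₂ : Matrix (Fin n) (Fin p) ℂ, X = X₁ + X₂ → X₁.rank ≤ k →
      ∃ H₁ H₂ : Matrix (Fin n) (Fin p) ℂ, X = H₁ + H₂ ∧ H₁.rank ≤ 2 * k ∧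
        frobInner H₁ H₂ = 0 ∧ X₁ * H₂ᴴ = 0 ∧ X₁ᴴ * H₂ = 0 ∧
        nuclearNorm H₁ ≤ η * nuclearNorm H₂

/-- Best `k`-rank approximation error in the nuclear norm, `ρ_k(X)_*`. -/
noncomputable def rhoNuc {n p : ℕ} (k : ℕ) (X : Matrix (Fin n) (Fin p) ℂ) : ℝ :=
  sInf ((fun Z => nuclearNorm (X - Z)) '' {Z : Matrix (Fin n) (Fin p) ℂ | Z.rank ≤ k})

/-- `j^ε(u) = |u|` for `|u| ≥ ε` and `(u² + ε²)/(2ε)` otherwise. -/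
noncomputable def jeps (ε u : ℝ) : ℝ :=
  if ε ≤ |u| then |u| else (u ^ 2 + ε ^ 2) / (2 * ε)

/-- The functional `𝒥_ε(X) = ∑ᵢ j^ε(σᵢ(X))`. -/
noncomputable def Jeps {n p : ℕ} (ε : ℝ) (X : Matrix (Fin n) (Fin p) ℂ) : ℝ :=
  ∑ i : Fin n, jeps ε (sv X (i : ℕ))

/-- `(X^ℓ, W^ℓ, ε_ℓ)_ℓ` is an output of the IRLS-M algorithm with measurement map `S`,
data `M`, parameters `γ > 0` and `K`.  Here `X (ℓ+1)` is the weighted least squares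
minimizer for the weight `W ℓ`, `ε (ℓ+1) = min (ε ℓ) (γ σ_{K+1}(X^{ℓ+1}))`, and
`W (ℓ+1)` is built from an eigendecomposition of `X^{ℓ+1}(X^{ℓ+1})ᴴ` together with the
`ε`-stabilization of the singular values.  If `ε` reaches `0` the algorithm stops. -/
structure IsIRLSM {n p m : ℕ} (S : Matrix (Fin n) (Fin p) ℂ →ₗ[ℂ] (Fin m → ℂ))
    (M : Fin m → ℂ) (γ : ℝ) (K : ℕ)
    (X : ℕ → Matrix (Fin n) (Fin p) ℂ)
    (W : ℕ → Matrix (Fin n) (Fin n) ℂ)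
    (ε : ℕ → ℝ) : Prop where
  w_init : W 0 = 1
  eps_init : ε 0 = 1
  x_feasible : ∀ ℓ : ℕ, ε ℓ ≠ 0 → S (X (ℓ + 1)) = M
  x_min : ∀ ℓ : ℕ, ε ℓ ≠ 0 → ∀ Y : Matrix (Fin n) (Fin p) ℂ, S Y = M →
    frobNorm (matSqrt (W ℓ) * X (ℓ + 1)) ^ 2 ≤ frobNorm (matSqrt (W ℓ) * Y) ^ 2
  eps_update : ∀ ℓ : ℕ, ε ℓ ≠ 0 → ε (ℓ + 1) = min (ε ℓ) (γ * sv (X (ℓ + 1)) K)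
  w_update : ∀ ℓ : ℕ, ε ℓ ≠ 0 → ε (ℓ + 1) ≠ 0 →
    ∃ U : Matrix (Fin n) (Fin n) ℂ, U * Uᴴ = 1 ∧ Uᴴ * U = 1 ∧
      X (ℓ + 1) * (X (ℓ + 1))ᴴ =
        U * Matrix.diagonal (fun i : Fin n => ((sv (X (ℓ + 1)) (i : ℕ) : ℂ)) ^ 2) * Uᴴ ∧
      W (ℓ + 1) =
        U * Matrix.diagonal
            (fun i : Fin n => (((max (sv (X (ℓ + 1)) (i : ℕ)) (ε (ℓ + 1)) : ℝ) : ℂ))⁻¹) * Uᴴ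
  w_stop : ∀ ℓ : ℕ, ε ℓ ≠ 0 → ε (ℓ + 1) = 0 → W (ℓ + 1) = W ℓ
  stopped : ∀ ℓ : ℕ, ε ℓ = 0 → X (ℓ + 1) = X ℓ ∧ W (ℓ + 1) = W ℓ ∧ ε (ℓ + 1) = 0

section SqrtPort
open scoped MatrixOrder

/-- Positive square root (port of the removed `Matrix.PosSemidef.sqrt`). -/
noncomputable def _root_.Matrix.PosSemidef.sqrt {n : ℕ} {A : Matrix (Fin n) (Fin n) ℂ}
    (hA : A.PosSemidef) : Matrix (Fin n) (Fin n) ℂ :=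
  (hA.1.eigenvectorUnitary : Matrix (Fin n) (Fin n) ℂ) *
    Matrix.diagonal (fun i => (RCLike.ofReal (Real.sqrt (hA.1.eigenvalues i)) : ℂ)) *
    (star hA.1.eigenvectorUnitary : Matrix (Fin n) (Fin n) ℂ)

lemma _root_.Matrix.PosSemidef.sqrt_eq_cfcSqrt {n : ℕ} {A : Matrix (Fin n) (Fin n) ℂ}
    (hA : A.PosSemidef) : hA.sqrt = CFC.sqrt A := by
  rw [CFC.sqrt_eq_cfc, cfc_nnreal_eq_real _ A, hA.1.cfc_eq, IsHermitian.cfc, Unitary.conjStarAlgAut_apply,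
    Matrix.PosSemidef.sqrt]
  congr 2
  congr 1
  funext i
  simp [Real.coe_sqrt, Real.coe_toNNReal', max_eq_left (hA.eigenvalues_nonneg i)]

lemma _root_.Matrix.PosSemidef.posSemidef_sqrt {n : ℕ} {A : Matrix (Fin n) (Fin n) ℂ}
    (hA : A.PosSemidef) : hA.sqrt.PosSemidef := by
  rw [hA.sqrt_eq_cfcSqrt]
  exact Matrix.nonneg_iff_posSemidef.mp (CFC.sqrt_nonneg A)

lemma _root_.Matrix.PosSemidef.sqrt_mul_self {n : ℕ} {A : Matrix (Fin n) (Fin n) ℂ}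
    (hA : A.PosSemidef) : hA.sqrt * hA.sqrt = A := by
  rw [hA.sqrt_eq_cfcSqrt]
  exact CFC.sqrt_mul_sqrt_self A hA.nonneg

lemma _root_.Matrix.PosSemidef.eq_sqrt_of_sq_eq {n : ℕ} {A : Matrix (Fin n) (Fin n) ℂ}
    (hA : A.PosSemidef) {B : Matrix (Fin n) (Fin n) ℂ} (hB : B.PosSemidef) (hAB : A ^ 2 = B) :
    A = hB.sqrt := by
  rw [hB.sqrt_eq_cfcSqrt]
  exact (CFC.sqrt_unique (by rw [← sq]; exact hAB) hA.nonneg).symm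

end SqrtPort

lemma sum_getD {l : List ℝ} {n : ℕ} (h : l.length = n) :
    ∑ i : Fin n, l.getD i 0 = l.sum := by
  subst h
  conv_rhs => rw [← List.ofFn_getElem (xs := l), List.sum_ofFn]
  exact Finset.sum_congr rfl fun i _ => List.getD_eq_getElem l 0 i.isLt

lemma nuclearNorm_eq_sum {n p : ℕ} (X : Matrix (Fin n) (Fin p) ℂ) :
    nuclearNorm X = ∑ j : Fin n,
      Real.sqrt ((Matrix.isHermitian_mul_conjTranspose_self X).eigenvalues j) := by
  unfold nuclearNorm sv
  rw [sum_getD (by simp [List.length_mergeSort]),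
    (List.mergeSort_perm _ _).sum_eq, List.sum_ofFn]

lemma trace_sqrt {n : ℕ} {A : Matrix (Fin n) (Fin n) ℂ} (hA : A.PosSemidef) :
    Matrix.trace hA.sqrt = ((∑ j, Real.sqrt (hA.1.eigenvalues j) : ℝ) : ℂ) := by
  rw [Matrix.PosSemidef.sqrt, trace_mul_cycle,
    Matrix.mem_unitaryGroup_iff'.mp (Matrix.IsHermitian.eigenvectorUnitary hA.1).2,
    one_mul, trace_diagonal]
  push_cast
  rfl

lemma sqrt_mul_eq_zero {n : ℕ} {A B : Matrix (Fin n) (Fin n) ℂ}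
    (hA : A.PosSemidef) (hB : B.IsHermitian) (h : A * B = 0) : hA.sqrt * B = 0 := by
  rw [← Matrix.conjTranspose_mul_self_eq_zero]
  calc (hA.sqrt * B)ᴴ * (hA.sqrt * B)
      = B * (hA.sqrt * hA.sqrt) * B := by
        rw [conjTranspose_mul, hB.eq, hA.posSemidef_sqrt.1.eq, mul_assoc, mul_assoc]; rw [mul_assoc]
    _ = 0 := by rw [hA.sqrt_mul_self, mul_assoc, h, mul_zero]

lemma sqrt_add_of_mul_eq_zero {n : ℕ} {A B : Matrix (Fin n) (Fin n) ℂ}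
    (hA : A.PosSemidef) (hB : B.PosSemidef) (hAB : (A + B).PosSemidef)
    (h1 : A * B = 0) (h2 : B * A = 0) : hAB.sqrt = hA.sqrt + hB.sqrt := by
  have hsB : hB.sqrt * A = 0 := sqrt_mul_eq_zero hB hA.1 h2
  have hAsB : A * hB.sqrt = 0 := by
    have := congrArg Matrix.conjTranspose hsB
    rwa [conjTranspose_mul, hA.1.eq, hB.posSemidef_sqrt.1.eq, conjTranspose_zero] at this
  have hss : hA.sqrt * hB.sqrt = 0 := by
    rw [← Matrix.conjTranspose_mul_self_eq_zero]
    calc (hA.sqrt * hB.sqrt)ᴴ * (hA.sqrt * hB.sqrt)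
        = hB.sqrt * (hA.sqrt * hA.sqrt * hB.sqrt) := by
          rw [conjTranspose_mul, hA.posSemidef_sqrt.1.eq, hB.posSemidef_sqrt.1.eq, mul_assoc]; rw [mul_assoc]
      _ = 0 := by rw [hA.sqrt_mul_self, hAsB, mul_zero]
  have hss' : hB.sqrt * hA.sqrt = 0 := by
    have := congrArg Matrix.conjTranspose hss
    rwa [conjTranspose_mul, hA.posSemidef_sqrt.1.eq, hB.posSemidef_sqrt.1.eq,
      conjTranspose_zero] at this
  refine ((hA.posSemidef_sqrt.add hB.posSemidef_sqrt).eq_sqrt_of_sq_eq hAB ?_).symm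
  rw [pow_two, add_mul, mul_add, mul_add, hss, hss', hA.sqrt_mul_self, hB.sqrt_mul_self]
  simp

lemma nuclearNorm_eq_trace {n p : ℕ} (X : Matrix (Fin n) (Fin p) ℂ) :
    ((nuclearNorm X : ℝ) : ℂ) = Matrix.trace (Matrix.posSemidef_self_mul_conjTranspose X).sqrt := by
  rw [nuclearNorm_eq_sum, trace_sqrt]

lemma trace_sqrt_congr {n : ℕ} {M N : Matrix (Fin n) (Fin n) ℂ} (h : M = N)
    (hM : M.PosSemidef) (hN : N.PosSemidef) :
    Matrix.trace hM.sqrt = Matrix.trace hN.sqrt := by subst h; rfl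

/-- if `XZ* = 0` and `X*Z = 0` then `‖X + Z‖_* = ‖X‖_* + ‖Z‖_*`. -/
theorem statement14 {n p : ℕ} (hnp : n ≤ p)
    (X Z : Matrix (Fin n) (Fin p) ℂ) (h1 : X * Zᴴ = 0) (h2 : Xᴴ * Z = 0) :
    nuclearNorm (X + Z) = nuclearNorm X + nuclearNorm Z := by
  have hA : (X * Xᴴ).PosSemidef := Matrix.posSemidef_self_mul_conjTranspose X
  have hB : (Z * Zᴴ).PosSemidef := Matrix.posSemidef_self_mul_conjTranspose Z
  have h1' : Z * Xᴴ = 0 := by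
    have := congrArg Matrix.conjTranspose h1
    simpa using this
  have hEq : (X + Z) * (X + Z)ᴴ = X * Xᴴ + Z * Zᴴ := by
    simp [conjTranspose_add, Matrix.mul_add, Matrix.add_mul, h1, h1']
  have hAB0 : (X * Xᴴ) * (Z * Zᴴ) = 0 := by
    rw [Matrix.mul_assoc X Xᴴ (Z * Zᴴ), ← Matrix.mul_assoc Xᴴ Z Zᴴ, h2, Matrix.zero_mul,
      Matrix.mul_zero]
  have hBA0 : (Z * Zᴴ) * (X * Xᴴ) = 0 := by
    have h2' : Zᴴ * X = 0 := by
      have := congrArg Matrix.conjTranspose h2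
      simpa using this
    rw [Matrix.mul_assoc Z Zᴴ (X * Xᴴ), ← Matrix.mul_assoc Zᴴ X Xᴴ, h2', Matrix.zero_mul,
      Matrix.mul_zero]
  have hABp : (X * Xᴴ + Z * Zᴴ).PosSemidef := hA.add hB
  have key : ((nuclearNorm (X + Z) : ℝ) : ℂ) = ((nuclearNorm X : ℝ) : ℂ) + ((nuclearNorm Z : ℝ) : ℂ) := by
    rw [nuclearNorm_eq_trace, nuclearNorm_eq_trace, nuclearNorm_eq_trace,
      trace_sqrt_congr hEq _ hABp, sqrt_add_of_mul_eq_zero hA hB hABp hAB0 hBA0, trace_add]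
  exact_mod_cast key


end IRLSM
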